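/- arXiv:2101.12271 — 2 statements merged into one kernel-verified Lean document; each statement's English description precedes it below -/
import Mathlib

section
/- Let γ be a c.e. numbering with at least two equivalence classes (i.e. there exist two ∼_γ-inequivalent natural numbers). Then for all A, B ⊆ ℕ, A ≤_γ B if and only if A ≤_T B. -/
open Nat Part

/-- Partial functions on `ℕ` computable relative to an oracle set `A`. -/
inductive OracleRecursiveIn (A : Set ℕ) : (ℕ →. ℕ) → Prop
  | zero : OracleRecursiveIn A (pure 0)
  | succ : OracleRecursiveIn A ↑Nat.succ
  | left : OracleRecursiveIn A ↑fun n : ℕ => n.unpair.1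
  | right : OracleRecursiveIn A ↑fun n : ℕ => n.unpair.2
  | oracle : OracleRecursiveIn A ↑fun n : ℕ => A.indicator 1 n
  | pair {f g} : OracleRecursiveIn A f → OracleRecursiveIn A g →
      OracleRecursiveIn A fun n => Nat.pair <$> f n <*> g n
  | comp {f g} : OracleRecursiveIn A f → OracleRecursiveIn A g →
      OracleRecursiveIn A fun n => g n >>= f
  | prec {f g} : OracleRecursiveIn A f → OracleRecursiveIn A g →
      OracleRecursiveIn A (Nat.unpaired fun a n =>
        n.rec (f a) fun y IH => do let i ← IH; g (Nat.pair a (Nat.pair y i)))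
  | rfind {f} : OracleRecursiveIn A f →
      OracleRecursiveIn A fun a => Nat.rfind fun n => (fun m => m = 0) <$> f (Nat.pair a n)

/-- A total function `f : ℕ → ℕ` is `A`-computable. -/
def OracleComputableIn (A : Set ℕ) (f : ℕ → ℕ) : Prop :=
  OracleRecursiveIn A fun n => Part.some (f n)

/-- A total binary function is `A`-computable. -/
def OracleComputableIn₂ (A : Set ℕ) (h : ℕ → ℕ → ℕ) : Prop :=
  OracleComputableIn A fun n => h n.unpair.1 n.unpair.2

/-- The characteristic function of a set of naturals. -/
noncomputable def chi (A : Set ℕ) : ℕ → ℕ := A.indicator 1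

/-- Turing reducibility: `A ≤_T B`. -/
def TuringLE (A B : Set ℕ) : Prop := OracleComputableIn B (chi A)

/-- `A` is computable. -/
def SetComputable (A : Set ℕ) : Prop := OracleComputableIn ∅ (chi A)

/-- `X` is computably enumerable in `A`: `X` is the domain of a partial
`A`-computable function. -/
def CEIn (A : Set ℕ) (X : Set ℕ) : Prop :=
  ∃ p : ℕ →. ℕ, OracleRecursiveIn A p ∧ X = p.Dom

/-- `A ≤_γ B` (`A` is `(γ,B)`-low): every total `A`-computable function has a
`B`-computable `γ`-lift. -/
def GammaLE (γ : ℕ → ℕ → Prop) (A B : Set ℕ) : Prop :=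
  ∀ f : ℕ → ℕ, OracleComputableIn A f →
    ∃ g : ℕ → ℕ, OracleComputableIn B g ∧ ∀ n, γ (f n) (g n)

/-- `A` is `γ`-low: `A ≤_γ ∅`. -/
def GammaLow (γ : ℕ → ℕ → Prop) (A : Set ℕ) : Prop := GammaLE γ A ∅

/-- `γ` is `(n, A)`-divisible (for finite `n`). -/
def DivisibleFin (γ : ℕ → ℕ → Prop) (n : ℕ) (A : Set ℕ) : Prop :=
  ∃ (x : Fin n → ℕ) (X : Fin n → Set ℕ),
    (∀ i, CEIn A (X i)) ∧
    (∀ i, {m | γ (x i) m} ⊆ X i) ∧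
    (∀ i j, i ≠ j → {m | γ (x i) m} ∩ X j = ∅)

/-- `γ` is `(ω, A)`-divisible. -/
def DivisibleOmega (γ : ℕ → ℕ → Prop) (A : Set ℕ) : Prop :=
  ∃ (x : ℕ → ℕ) (X : ℕ → Set ℕ),
    OracleComputableIn A x ∧
    CEIn A {k : ℕ | k.unpair.2 ∈ X k.unpair.1} ∧
    (∀ i, {m | γ (x i) m} ⊆ X i) ∧
    (∀ i j, i ≠ j → {m | γ (x i) m} ∩ X j = ∅)

/-- `γ` is `A`-precomplete: every partial `A`-computable function has a total
`A`-computable totalization modulo `γ`. -/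
def PrecompleteIn (γ : ℕ → ℕ → Prop) (A : Set ℕ) : Prop :=
  ∀ ψ : ℕ →. ℕ, OracleRecursiveIn A ψ →
    ∃ f : ℕ → ℕ, OracleComputableIn A f ∧ ∀ n, ∀ y ∈ ψ n, γ y (f n)

/-- `γ` is a c.e. numbering. -/
def CENumbering (γ : ℕ → ℕ → Prop) : Prop :=
  CEIn ∅ {k : ℕ | γ k.unpair.1 k.unpair.2}

/-- The `e`-th partial computable function. -/
def phi (e : ℕ) : ℕ →. ℕ := (Denumerable.ofNat Nat.Partrec.Code e).eval

/-- The `e`-th computably enumerable set. -/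
def Wset (e : ℕ) : Set ℕ := (phi e).Dom

/-- The halting set `∅'`. -/
def halting : Set ℕ := {e : ℕ | (phi e e).Dom}


private lemma partrec_recursiveIn {A : Set ℕ} {f : ℕ →. ℕ} (h : Nat.Partrec f) :
    OracleRecursiveIn A f := by
  induction h with
  | zero => exact .zero
  | succ => exact .succ
  | left => exact .left
  | right => exact .right
  | pair _ _ ih1 ih2 => exact .pair ih1 ih2
  | comp _ _ ih1 ih2 => exact .comp ih1 ih2
  | prec _ _ ih1 ih2 => exact .prec ih1 ih2
  | rfind _ ih => exact .rfind ih

private lemma oracle_eq (A : Set ℕ) :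
    (fun n => Set.indicator A (1 : ℕ → Part ℕ) n) = fun n => Part.some (A.indicator 1 n) := by
  classical
  funext n
  by_cases h : n ∈ A <;>
    simp [Set.indicator_of_mem, Set.indicator_of_notMem, h] <;> rfl

private lemma recursiveIn_chi {A : Set ℕ} : OracleRecursiveIn A fun n => Part.some (chi A n) := by
  have := OracleRecursiveIn.oracle (A := A)
  rwa [oracle_eq] at this

private lemma recursiveIn_empty_partrec {f : ℕ →. ℕ} (h : OracleRecursiveIn ∅ f) :
    Nat.Partrec f := by
  induction h with
  | zero => exact Nat.Partrec.zero
  | succ => exact Nat.Partrec.succ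
  | left => exact Nat.Partrec.left
  | right => exact Nat.Partrec.right
  | oracle =>
      rw [oracle_eq]
      have : (fun n : ℕ => Part.some ((∅ : Set ℕ).indicator 1 n)) = (pure 0 : ℕ →. ℕ) := by
        funext n; simp [Set.indicator_empty]; rfl
      rw [this]; exact Nat.Partrec.zero
  | pair _ _ ih1 ih2 => exact Nat.Partrec.pair ih1 ih2
  | comp _ _ ih1 ih2 => exact Nat.Partrec.comp ih1 ih2
  | prec _ _ ih1 ih2 => exact Nat.Partrec.prec ih1 ih2
  | rfind _ ih => exact Nat.Partrec.rfind ih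

private lemma recursiveIn_of_turingLE {A B : Set ℕ} (hT : TuringLE A B)
    {f : ℕ →. ℕ} (h : OracleRecursiveIn A f) : OracleRecursiveIn B f := by
  induction h with
  | zero => exact .zero
  | succ => exact .succ
  | left => exact .left
  | right => exact .right
  | oracle => rw [oracle_eq]; exact hT
  | pair _ _ ih1 ih2 => exact .pair ih1 ih2
  | comp _ _ ih1 ih2 => exact .comp ih1 ih2
  | prec _ _ ih1 ih2 => exact .prec ih1 ih2
  | rfind _ ih => exact .rfind ih

/-- For a c.e. numbering `γ` with at least two equivalence
classes, `A ≤_γ B` iff `A ≤_T B`. -/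
theorem gammaLE_iff_turingLE (γ : ℕ → ℕ → Prop) (hγ : Equivalence γ)
    (hce : CENumbering γ) (hclasses : ∃ x y : ℕ, ¬ γ x y)
    (A B : Set ℕ) : GammaLE γ A B ↔ TuringLE A B := by
  constructor
  · -- hard direction
    intro hle
    obtain ⟨x, y, hxy⟩ := hclasses
    obtain ⟨q, hq, hdom⟩ := hce
    have hqp : Nat.Partrec q := recursiveIn_empty_partrec hq
    have hmem : ∀ u m : ℕ, γ u m ↔ (q (Nat.pair u m)).Dom := by
      intro u m
      have : (Nat.pair u m) ∈ {k : ℕ | γ k.unpair.1 k.unpair.2} ↔ γ u m := by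
        simp [Nat.unpair_pair]
      rw [← this, hdom]; exact Iff.rfl
    -- the A-computable function f
    classical
    set f : ℕ → ℕ := fun n => if chi A n = 1 then x else y with hf
    have hk : Computable fun t : ℕ => if t = 1 then x else y :=
      Primrec.to_comp
        (Primrec.ite (Primrec.eq.comp Primrec.id (Primrec.const 1))
          (Primrec.const x) (Primrec.const y))
    have hfA : OracleComputableIn A f := by
      have h1 : OracleRecursiveIn A fun n =>
          (Part.some (chi A n)) >>= fun t => Part.some (if t = 1 then x else y) := by
        refine OracleRecursiveIn.comp (partrec_recursiveIn ?_) recursiveIn_chi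
        exact Partrec.nat_iff.1 hk
      have h2 : (fun n => (Part.some (chi A n)) >>=
          fun t => Part.some (if t = 1 then x else y)) = fun n => Part.some (f n) := by
        funext n
        exact (Part.bind_some _ _).trans rfl
      rwa [h2] at h1
    obtain ⟨g, hgB, hgf⟩ := hle f hfA
    -- merge the two c.e. sets
    have hF : Nat.Partrec fun m => (q (Nat.pair x m)).map fun _ => 1 :=
      Partrec.nat_iff.1 <| Partrec.map
        ((Partrec.nat_iff.2 hqp).comp
          ((Primrec₂.natPair.comp (Primrec.const x) Primrec.id).to_comp))
        ((Computable.const 1).comp Computable.fst).to₂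
    have hG : Nat.Partrec fun m => (q (Nat.pair y m)).map fun _ => 0 :=
      Partrec.nat_iff.1 <| Partrec.map
        ((Partrec.nat_iff.2 hqp).comp
          ((Primrec₂.natPair.comp (Primrec.const y) Primrec.id).to_comp))
        ((Computable.const 0).comp Computable.fst).to₂
    obtain ⟨h, hh, hhspec⟩ := Nat.Partrec.merge' hF hG
    -- key valuation fact
    have key : ∀ n, h (g n) = Part.some (chi A n) := by
      intro n
      have hfg := hgf n
      by_cases hn : n ∈ A
      · have hchi : chi A n = 1 := by simp [chi, Set.indicator_of_mem hn]
        have hfx : f n = x := by simp [hf, hchi]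
        have hgx : γ x (g n) := hfx ▸ hfg
        have hgy : ¬ γ y (g n) := fun hy => hxy (hγ.trans hgx (hγ.symm hy))
        have hdomF : ((fun m => (q (Nat.pair x m)).map fun _ => 1) (g n)).Dom := by
          simpa [Part.dom_iff_mem] using (hmem x (g n)).1 hgx
        have hdh : (h (g n)).Dom := (hhspec (g n)).2.2 (Or.inl hdomF)
        obtain ⟨v, hv⟩ := Part.dom_iff_mem.1 hdh
        have := (hhspec (g n)).1 v hv
        rcases this with hvF | hvG
        · obtain ⟨w, _, rfl⟩ := (Part.mem_map_iff _).1 hvF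
          rw [Part.eq_some_iff.2 hv, hchi]
        · exfalso
          obtain ⟨w, hw, _⟩ := (Part.mem_map_iff _).1 hvG
          exact hgy ((hmem y (g n)).2 (Part.dom_iff_mem.2 ⟨w, hw⟩))
      · have hchi : chi A n = 0 := by simp [chi, Set.indicator_of_notMem hn]
        have hfx : f n = y := by simp [hf, hchi]
        have hgy : γ y (g n) := hfx ▸ hfg
        have hgx : ¬ γ x (g n) := fun hx => hxy (hγ.trans hx (hγ.symm hgy))
        have hdomG : ((fun m => (q (Nat.pair y m)).map fun _ => 0) (g n)).Dom := by
          simpa [Part.dom_iff_mem] using (hmem y (g n)).1 hgy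
        have hdh : (h (g n)).Dom := (hhspec (g n)).2.2 (Or.inr hdomG)
        obtain ⟨v, hv⟩ := Part.dom_iff_mem.1 hdh
        have := (hhspec (g n)).1 v hv
        rcases this with hvF | hvG
        · exfalso
          obtain ⟨w, hw, _⟩ := (Part.mem_map_iff _).1 hvF
          exact hgx ((hmem x (g n)).2 (Part.dom_iff_mem.2 ⟨w, hw⟩))
        · obtain ⟨w, _, rfl⟩ := (Part.mem_map_iff _).1 hvG
          rw [Part.eq_some_iff.2 hv, hchi]
    have hfin : OracleRecursiveIn B fun n => (Part.some (g n)) >>= h :=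
      OracleRecursiveIn.comp (partrec_recursiveIn hh) hgB
    have heq : (fun n => (Part.some (g n)) >>= h) = fun n => Part.some (chi A n) := by
      funext n; exact (Part.bind_some _ _).trans (key n)
    unfold TuringLE OracleComputableIn
    rwa [heq] at hfin
  · -- easy direction
    intro hT f hf
    exact ⟨f, recursiveIn_of_turingLE hT hf, fun n => hγ.refl (f n)⟩
end

section
/- Recursion theorem with parameters for relatively precomplete numberings: if γ is an A-precomplete numbering, then for every total A-computable binary function h: ℕ × ℕ → ℕ there is a total A-computable unary function f: ℕ → ℕ such that h(n, f(n)) ∼_γ f(n) for all n ∈ ℕ. -/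
open Nat Part

/- ========================  Auxiliary development  ======================== -/

namespace RecThmAux

open Nat.Partrec (Code)
open Nat.Partrec.Code

/-- Codes for partial functions computable relative to an oracle. -/
inductive CodeO : Type
  | zero : CodeO
  | succ : CodeO
  | left : CodeO
  | right : CodeO
  | oracle : CodeO
  | pair (cf cg : CodeO) : CodeO
  | comp (cf cg : CodeO) : CodeO
  | prec (cf cg : CodeO) : CodeO
  | rfind (cf : CodeO) : CodeO

/-- Semantics of oracle codes, relative to a partial oracle `O`. -/
def evalp (O : ℕ →. ℕ) : CodeO → ℕ →. ℕ
  | .zero => pure 0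
  | .succ => ↑Nat.succ
  | .left => ↑fun n : ℕ => n.unpair.1
  | .right => ↑fun n : ℕ => n.unpair.2
  | .oracle => O
  | .pair cf cg => fun n => Nat.pair <$> evalp O cf n <*> evalp O cg n
  | .comp cf cg => fun n => evalp O cg n >>= evalp O cf
  | .prec cf cg => Nat.unpaired fun a n =>
      n.rec (evalp O cf a) fun y IH => do let i ← IH; evalp O cg (Nat.pair a (Nat.pair y i))
  | .rfind cf => fun a => Nat.rfind fun n => (fun m => m = 0) <$> evalp O cf (Nat.pair a n)

theorem oracle_eq (A : Set ℕ) :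
    (↑fun n : ℕ => A.indicator 1 n : ℕ →. ℕ) = evalp (chi A : ℕ →. ℕ) CodeO.oracle := by
  funext n
  rw [show evalp (chi A : ℕ →. ℕ) CodeO.oracle = (chi A : ℕ →. ℕ) from rfl]
  rw [PFun.coe_val]
  show A.indicator 1 n = Part.some (chi A n)
  simp only [chi]
  by_cases hn : n ∈ A
  · rw [Set.indicator_of_mem hn, Set.indicator_of_mem hn]; rfl
  · rw [Set.indicator_of_notMem hn, Set.indicator_of_notMem hn]; rfl

theorem chi_recIn (A : Set ℕ) : OracleRecursiveIn A fun n => Part.some (chi A n) := by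
  have h := OracleRecursiveIn.oracle (A := A)
  rwa [oracle_eq A, show evalp (chi A : ℕ →. ℕ) CodeO.oracle
    = fun n => Part.some (chi A n) from rfl] at h

/-- Every `A`-recursive partial function has an oracle code. -/
theorem exists_codeO {A : Set ℕ} {f : ℕ →. ℕ} (h : OracleRecursiveIn A f) :
    ∃ c : CodeO, f = evalp (chi A : ℕ →. ℕ) c := by
  induction h with
  | zero => exact ⟨.zero, rfl⟩
  | succ => exact ⟨.succ, rfl⟩
  | left => exact ⟨.left, rfl⟩
  | right => exact ⟨.right, rfl⟩
  | oracle => exact ⟨.oracle, oracle_eq A⟩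
  | pair _ _ ihf ihg =>
      obtain ⟨cf, rfl⟩ := ihf; obtain ⟨cg, rfl⟩ := ihg; exact ⟨.pair cf cg, rfl⟩
  | comp _ _ ihf ihg =>
      obtain ⟨cf, rfl⟩ := ihf; obtain ⟨cg, rfl⟩ := ihg; exact ⟨.comp cf cg, rfl⟩
  | prec _ _ ihf ihg =>
      obtain ⟨cf, rfl⟩ := ihf; obtain ⟨cg, rfl⟩ := ihg; exact ⟨.prec cf cg, rfl⟩
  | rfind _ ihf =>
      obtain ⟨cf, rfl⟩ := ihf; exact ⟨.rfind cf, rfl⟩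

theorem evalp_prec_zero (O : ℕ →. ℕ) (cf cg : CodeO) (a : ℕ) :
    evalp O (.prec cf cg) (Nat.pair a 0) = evalp O cf a := by
  simp [evalp, Nat.unpaired]

theorem evalp_prec_succ (O : ℕ →. ℕ) (cf cg : CodeO) (a n : ℕ) :
    evalp O (.prec cf cg) (Nat.pair a (n + 1)) =
      (evalp O (.prec cf cg) (Nat.pair a n)).bind
        fun i => evalp O cg (Nat.pair a (Nat.pair n i)) := by
  have h0 : ∀ m : ℕ, evalp O (.prec cf cg) (Nat.pair a m) =
      m.rec (evalp O cf a)
        (fun y IH => IH.bind fun i => evalp O cg (Nat.pair a (Nat.pair y i))) := by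
    intro m
    rw [show evalp O (.prec cf cg) = Nat.unpaired (fun a n =>
      n.rec (evalp O cf a) fun y IH => do let i ← IH; evalp O cg (Nat.pair a (Nat.pair y i)))
      from rfl]
    simp only [Nat.unpaired, Nat.unpair_pair, Part.bind_eq_bind]
  rw [h0, h0]

theorem mem_seq_pair {p q : Part ℕ} {v : ℕ} :
    v ∈ (Nat.pair <$> p <*> q) ↔ ∃ a ∈ p, ∃ b ∈ q, Nat.pair a b = v := by
  have h : (Nat.pair <$> p <*> q) = p.bind fun a => q.map (Nat.pair a) := rfl
  rw [h]
  simp only [Part.mem_bind_iff, Part.mem_map_iff]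

/-- Monotonicity of `evalp` in the oracle. -/
theorem evalp_mono {O O' : ℕ →. ℕ} (h : ∀ n x, x ∈ O n → x ∈ O' n) :
    ∀ (c : CodeO) (x v : ℕ), v ∈ evalp O c x → v ∈ evalp O' c x := by
  intro c
  induction c with
  | zero => exact fun _ _ => id
  | succ => exact fun _ _ => id
  | left => exact fun _ _ => id
  | right => exact fun _ _ => id
  | oracle => exact h
  | pair cf cg ihf ihg =>
      intro x v hv
      rw [show evalp O (.pair cf cg) x = Nat.pair <$> evalp O cf x <*> evalp O cg x from rfl]
        at hv
      rw [show evalp O' (.pair cf cg) x = Nat.pair <$> evalp O' cf x <*> evalp O' cg x from rfl]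
      rw [mem_seq_pair] at hv ⊢
      obtain ⟨a, ha, b, hb, rfl⟩ := hv
      exact ⟨a, ihf _ _ ha, b, ihg _ _ hb, rfl⟩
  | comp cf cg ihf ihg =>
      intro x v hv
      rw [show evalp O (.comp cf cg) x = (evalp O cg x).bind (evalp O cf) from rfl] at hv
      rw [show evalp O' (.comp cf cg) x = (evalp O' cg x).bind (evalp O' cf) from rfl]
      replace hv := Part.mem_bind_iff.1 hv
      refine Part.mem_bind_iff.2 ?_
      obtain ⟨a, ha, hb⟩ := hv
      exact ⟨a, ihg _ _ ha, ihf _ _ hb⟩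
  | prec cf cg ihf ihg =>
      intro x v
      obtain ⟨a, n, rfl⟩ : ∃ a n, x = Nat.pair a n :=
        ⟨x.unpair.1, x.unpair.2, (Nat.pair_unpair x).symm⟩
      induction n generalizing v with
      | zero =>
          rw [evalp_prec_zero, evalp_prec_zero]; exact ihf a v
      | succ n ih =>
          rw [evalp_prec_succ, evalp_prec_succ]
          intro hv
          rw [Part.mem_bind_iff] at hv ⊢
          obtain ⟨i, hi, hs⟩ := hv
          exact ⟨i, ih i hi, ihg _ _ hs⟩
  | rfind cf ihf =>
      intro x v hv
      rw [show evalp O (.rfind cf) x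
          = Nat.rfind (fun n => (fun m => m = 0) <$> evalp O cf (Nat.pair x n)) from rfl] at hv
      rw [show evalp O' (.rfind cf) x
          = Nat.rfind (fun n => (fun m => m = 0) <$> evalp O' cf (Nat.pair x n)) from rfl]
      replace hv := Nat.mem_rfind.1 hv
      refine Nat.mem_rfind.2 ?_
      refine ⟨?_, ?_⟩
      · obtain ⟨a, ha, e⟩ := Part.mem_map_iff _ |>.1 hv.1
        exact Part.mem_map_iff _ |>.2 ⟨a, ihf _ _ ha, e⟩
      · intro m hm
        obtain ⟨a, ha, e⟩ := Part.mem_map_iff _ |>.1 (hv.2 hm)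
        exact Part.mem_map_iff _ |>.2 ⟨a, ihf _ _ ha, e⟩

/-- The restriction of a total oracle to arguments `< m`. -/
def restr (g : ℕ → ℕ) (m : ℕ) : ℕ →. ℕ := fun q => if q < m then Part.some (g q) else Part.none

theorem restr_le (g : ℕ → ℕ) (m : ℕ) : ∀ n x, x ∈ restr g m n → x ∈ (g : ℕ →. ℕ) n := by
  intro n x hx
  simp only [restr] at hx
  split at hx
  · simpa [PFun.coe_val] using hx
  · simp at hx

theorem restr_mono (g : ℕ → ℕ) {m m' : ℕ} (h : m ≤ m') :
    ∀ n x, x ∈ restr g m n → x ∈ restr g m' n := by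
  intro n x hx
  simp only [restr] at hx ⊢
  split at hx
  · rw [if_pos (lt_of_lt_of_le (by assumption) h)]; exact hx
  · simp at hx

/-- Compactness: a converging oracle computation uses only finitely much of the oracle. -/
theorem evalp_compact {g : ℕ → ℕ} :
    ∀ (c : CodeO) (x v : ℕ), v ∈ evalp (g : ℕ →. ℕ) c x → ∃ m, v ∈ evalp (restr g m) c x := by
  intro c
  induction c with
  | zero => exact fun x v hv => ⟨0, hv⟩
  | succ => exact fun x v hv => ⟨0, hv⟩
  | left => exact fun x v hv => ⟨0, hv⟩
  | right => exact fun x v hv => ⟨0, hv⟩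
  | oracle =>
      intro x v hv
      refine ⟨x + 1, ?_⟩
      have hx : v = g x := by simpa [evalp, PFun.coe_val] using hv
      simp [evalp, restr, hx, Nat.lt_succ_self]
  | pair cf cg ihf ihg =>
      intro x v hv
      rw [show evalp (g : ℕ →. ℕ) (.pair cf cg) x
          = Nat.pair <$> evalp (g : ℕ →. ℕ) cf x <*> evalp (g : ℕ →. ℕ) cg x from rfl] at hv
      rw [mem_seq_pair] at hv
      obtain ⟨a, ha, b, hb, rfl⟩ := hv
      obtain ⟨m₁, h₁⟩ := ihf _ _ ha
      obtain ⟨m₂, h₂⟩ := ihg _ _ hb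
      refine ⟨max m₁ m₂, ?_⟩
      rw [show evalp (restr g (max m₁ m₂)) (.pair cf cg) x
          = Nat.pair <$> evalp (restr g (max m₁ m₂)) cf x
              <*> evalp (restr g (max m₁ m₂)) cg x from rfl]
      rw [mem_seq_pair]
      exact ⟨a, evalp_mono (restr_mono g (le_max_left _ _)) _ _ _ h₁,
        b, evalp_mono (restr_mono g (le_max_right _ _)) _ _ _ h₂, rfl⟩
  | comp cf cg ihf ihg =>
      intro x v hv
      rw [show evalp (g : ℕ →. ℕ) (.comp cf cg) x
          = (evalp (g : ℕ →. ℕ) cg x).bind (evalp (g : ℕ →. ℕ) cf) from rfl] at hv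
      replace hv := Part.mem_bind_iff.1 hv
      obtain ⟨a, ha, hb⟩ := hv
      obtain ⟨m₁, h₁⟩ := ihg _ _ ha
      obtain ⟨m₂, h₂⟩ := ihf _ _ hb
      refine ⟨max m₁ m₂, ?_⟩
      rw [show evalp (restr g (max m₁ m₂)) (.comp cf cg) x
          = (evalp (restr g (max m₁ m₂)) cg x).bind (evalp (restr g (max m₁ m₂)) cf) from rfl]
      refine Part.mem_bind_iff.2 ?_
      exact ⟨a, evalp_mono (restr_mono g (le_max_left _ _)) _ _ _ h₁,
        evalp_mono (restr_mono g (le_max_right _ _)) _ _ _ h₂⟩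
  | prec cf cg ihf ihg =>
      intro x v
      obtain ⟨a, n, rfl⟩ : ∃ a n, x = Nat.pair a n :=
        ⟨x.unpair.1, x.unpair.2, (Nat.pair_unpair x).symm⟩
      induction n generalizing v with
      | zero =>
          rw [evalp_prec_zero]
          intro hv
          obtain ⟨m, hm⟩ := ihf _ _ hv
          exact ⟨m, by rw [evalp_prec_zero]; exact hm⟩
      | succ n ih =>
          rw [evalp_prec_succ]
          intro hv
          rw [Part.mem_bind_iff] at hv
          obtain ⟨i, hi, hs⟩ := hv
          obtain ⟨m₁, h₁⟩ := ih i hi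
          obtain ⟨m₂, h₂⟩ := ihg _ _ hs
          refine ⟨max m₁ m₂, ?_⟩
          rw [evalp_prec_succ, Part.mem_bind_iff]
          exact ⟨i, evalp_mono (restr_mono g (le_max_left _ _)) _ _ _ h₁,
            evalp_mono (restr_mono g (le_max_right _ _)) _ _ _ h₂⟩
  | rfind cf ihf =>
      intro x v hv
      rw [show evalp (g : ℕ →. ℕ) (.rfind cf) x
          = Nat.rfind (fun n => (fun m => m = 0) <$> evalp (g : ℕ →. ℕ) cf (Nat.pair x n))
          from rfl] at hv
      replace hv := Nat.mem_rfind.1 hv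
      obtain ⟨htrue, hfalse⟩ := hv
      obtain ⟨a, ha, ea⟩ := Part.mem_map_iff _ |>.1 htrue
      obtain ⟨m₀, hm₀⟩ := ihf _ _ ha
      have H : ∀ n, ∃ m, n < v →
          false ∈ (fun m => decide (m = 0)) <$> evalp (restr g m) cf (Nat.pair x n) := by
        intro n
        by_cases hn : n < v
        · obtain ⟨b, hb, eb⟩ := Part.mem_map_iff _ |>.1 (hfalse hn)
          obtain ⟨m, hm⟩ := ihf _ _ hb
          exact ⟨m, fun _ => Part.mem_map_iff _ |>.2 ⟨b, hm, eb⟩⟩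
        · exact ⟨0, fun hc => absurd hc hn⟩
      choose F hF using H
      refine ⟨max m₀ ((Finset.range v).sup F), ?_⟩
      rw [show evalp (restr g (max m₀ ((Finset.range v).sup F))) (.rfind cf) x
          = Nat.rfind (fun n => (fun m => m = 0) <$>
              evalp (restr g (max m₀ ((Finset.range v).sup F))) cf (Nat.pair x n)) from rfl]
      refine Nat.mem_rfind.2 ?_
      constructor
      · exact Part.mem_map_iff _ |>.2
          ⟨a, evalp_mono (restr_mono g (le_max_left _ _)) _ _ _ hm₀, ea⟩
      · intro n hn
        obtain ⟨b, hb, eb⟩ := Part.mem_map_iff _ |>.1 (hF n hn)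
        have hle : F n ≤ max m₀ ((Finset.range v).sup F) :=
          le_trans (Finset.le_sup (Finset.mem_range.2 hn)) (le_max_right _ _)
        exact Part.mem_map_iff _ |>.2 ⟨b, evalp_mono (restr_mono g hle) _ _ _ hb, eb⟩

theorem pbind_some (a : ℕ) (f : ℕ →. ℕ) : (Part.some a).bind f = f a := Part.bind_some a f

/- ----------  plain computable ingredients  ---------- -/

private theorem punp1 : Primrec fun z : ℕ => z.unpair.1 := Primrec.fst.comp Primrec.unpair
private theorem punp2 : Primrec fun z : ℕ => z.unpair.2 := Primrec.snd.comp Primrec.unpair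

/-- The partial function reading an entry of an (encoded) finite list. -/
def idxf : ℕ →. ℕ := fun z => ((Denumerable.ofNat (List ℕ) z.unpair.1)[z.unpair.2]? : Part ℕ)

theorem idxf_partrec : Nat.Partrec idxf := by
  have hcomp : Computable fun z : ℕ => (Denumerable.ofNat (List ℕ) z.unpair.1)[z.unpair.2]? :=
    Primrec.list_getElem?.to_comp.comp
      ((Computable.ofNat (List ℕ)).comp punp1.to_comp) punp2.to_comp
  exact Partrec.nat_iff.1 hcomp.ofOption

noncomputable def cidx : Code := (Nat.Partrec.Code.exists_code.1 idxf_partrec).choose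

theorem cidx_eval : eval cidx = idxf := (Nat.Partrec.Code.exists_code.1 idxf_partrec).choose_spec

/-- Code of a computable total function. -/
noncomputable def codeTot (f : ℕ → ℕ) (hf : Computable f) : Code :=
  (Nat.Partrec.Code.exists_code.1 (Partrec.nat_iff.1 hf)).choose

theorem codeTot_eval (f : ℕ → ℕ) (hf : Computable f) (z : ℕ) :
    eval (codeTot f hf) z = Part.some (f z) := by
  have h := (Nat.Partrec.Code.exists_code.1 (Partrec.nat_iff.1 hf)).choose_spec
  rw [codeTot, h]; rfl

theorem comp_pair0 : Computable fun z : ℕ => Nat.pair z 0 :=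
  (Primrec₂.natPair.comp Primrec.id (Primrec.const 0)).to_comp

theorem comp_r1 : Computable fun z : ℕ =>
    Nat.pair (Nat.pair z.unpair.1 z.unpair.2.unpair.1) z.unpair.2.unpair.2 :=
  (Primrec₂.natPair.comp (Primrec₂.natPair.comp punp1 (punp1.comp punp2))
    (punp2.comp punp2)).to_comp

theorem comp_r2 : Computable fun z : ℕ =>
    Nat.pair z.unpair.1.unpair.1 (Nat.pair z.unpair.1.unpair.2 z.unpair.2) :=
  (Primrec₂.natPair.comp (punp1.comp punp1)
    (Primrec₂.natPair.comp (punp2.comp punp1) punp2)).to_comp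

noncomputable def cpair0 : Code := codeTot _ comp_pair0
noncomputable def cr1 : Code := codeTot _ comp_r1
noncomputable def cr2 : Code := codeTot _ comp_r2

theorem cpair0_eval (z : ℕ) : eval cpair0 z = Part.some (Nat.pair z 0) := codeTot_eval _ _ z
theorem cr1_eval (z : ℕ) : eval cr1 z
    = Part.some (Nat.pair (Nat.pair z.unpair.1 z.unpair.2.unpair.1) z.unpair.2.unpair.2) :=
  codeTot_eval _ _ z
theorem cr2_eval (z : ℕ) : eval cr2 z
    = Part.some (Nat.pair z.unpair.1.unpair.1 (Nat.pair z.unpair.1.unpair.2 z.unpair.2)) :=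
  codeTot_eval _ _ z

/- ----------  compilation of oracle codes into plain codes  ---------- -/

/-- Compile an oracle code into a plain code operating on `pair l x`, where `l`
encodes a finite list approximating the oracle. -/
noncomputable def trans : CodeO → Code
  | .zero => Code.zero
  | .succ => Code.comp Code.succ Code.right
  | .left => Code.comp Code.left Code.right
  | .right => Code.comp Code.right Code.right
  | .oracle => cidx
  | .pair cf cg => Code.pair (trans cf) (trans cg)
  | .comp cf cg => Code.comp (trans cf) (Code.pair Code.left (trans cg))
  | .prec cf cg => Code.comp (Code.prec (trans cf) (Code.comp (trans cg) cr2)) cr1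
  | .rfind cf => Code.comp (Code.rfind' (Code.comp (trans cf) cr2)) cpair0

/-- The finite-list oracle given by an encoded list. -/
def restrO (l : ℕ) : ℕ →. ℕ := fun q => ((Denumerable.ofNat (List ℕ) l)[q]? : Part ℕ)

theorem trans_eval (c : CodeO) : ∀ l x : ℕ,
    eval (trans c) (Nat.pair l x) = evalp (restrO l) c x := by
  induction c with
  | zero =>
      intro l x
      rfl
  | succ =>
      intro l x
      show eval Code.right (Nat.pair l x) >>= eval Code.succ = _
      simp [eval, evalp, PFun.coe_val, Nat.unpair_pair, Part.bind_some, pbind_some]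
      exact Part.bind_some _ _
  | left =>
      intro l x
      show eval Code.right (Nat.pair l x) >>= eval Code.left = _
      simp [eval, evalp, PFun.coe_val, Nat.unpair_pair, Part.bind_some, pbind_some]
      exact Part.bind_some _ _
  | right =>
      intro l x
      show eval Code.right (Nat.pair l x) >>= eval Code.right = _
      simp [eval, evalp, PFun.coe_val, Nat.unpair_pair, Part.bind_some, pbind_some]
      exact Part.bind_some _ _
  | oracle =>
      intro l x
      show eval cidx (Nat.pair l x) = _
      rw [cidx_eval]
      simp [idxf, evalp, restrO, Nat.unpair_pair]
  | pair cf cg ihf ihg =>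
      intro l x
      show Nat.pair <$> eval (trans cf) (Nat.pair l x) <*> eval (trans cg) (Nat.pair l x) = _
      rw [ihf, ihg]
      rfl
  | comp cf cg ihf ihg =>
      intro l x
      show eval (Code.pair Code.left (trans cg)) (Nat.pair l x) >>= eval (trans cf) = _
      have h1 : eval (Code.pair Code.left (trans cg)) (Nat.pair l x)
          = (evalp (restrO l) cg x).map (Nat.pair l) := by
        apply Part.ext
        intro v
        rw [show eval (Code.pair Code.left (trans cg)) (Nat.pair l x)
            = Nat.pair <$> eval Code.left (Nat.pair l x) <*> eval (trans cg) (Nat.pair l x)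
            from rfl]
        rw [mem_seq_pair, ihg]
        simp [eval, PFun.coe_val, Nat.unpair_pair, Part.mem_map_iff, Part.mem_some_iff]
      rw [h1]
      show ((evalp (restrO l) cg x).map (Nat.pair l)).bind (eval (trans cf)) = _
      refine (Part.bind_map _ _ _).trans ?_
      rw [show (fun y => eval (trans cf) (Nat.pair l y))
          = fun y => evalp (restrO l) cf y from funext fun y => ihf l y]
      rfl
  | prec cf cg ihf ihg =>
      intro l x
      obtain ⟨a, n, rfl⟩ : ∃ a n, x = Nat.pair a n :=
        ⟨x.unpair.1, x.unpair.2, (Nat.pair_unpair x).symm⟩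
      show eval cr1 (Nat.pair l (Nat.pair a n))
          >>= eval (Code.prec (trans cf) (Code.comp (trans cg) cr2)) = _
      rw [cr1_eval]
      simp only [Nat.unpair_pair, Part.bind_eq_bind, Part.bind_some, pbind_some]
      refine (Part.bind_some _ _).trans ?_
      induction n with
      | zero =>
          rw [eval_prec_zero, evalp_prec_zero]
          exact ihf l a
      | succ n ih =>
          rw [eval_prec_succ, evalp_prec_succ, ih]
          show (evalp (restrO l) (CodeO.prec cf cg) (Nat.pair a n)).bind _ = _
          rw [show (fun i => eval (Code.comp (trans cg) cr2)
                (Nat.pair (Nat.pair l a) (Nat.pair n i)))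
              = fun i => evalp (restrO l) cg (Nat.pair a (Nat.pair n i)) from funext fun i => by
            show eval cr2 (Nat.pair (Nat.pair l a) (Nat.pair n i)) >>= eval (trans cg) = _
            rw [cr2_eval]
            simp only [Nat.unpair_pair, Part.bind_eq_bind, Part.bind_some, pbind_some]
            refine (Part.bind_some _ _).trans ?_
            exact ihg l (Nat.pair a (Nat.pair n i))]
  | rfind cf ihf =>
      intro l x
      show eval cpair0 (Nat.pair l x)
          >>= eval (Code.rfind' (Code.comp (trans cf) cr2)) = _
      rw [cpair0_eval]
      refine (Part.bind_some _ _).trans ?_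
      have hq : ∀ n : ℕ, eval (Code.comp (trans cf) cr2) (Nat.pair (Nat.pair l x) n)
          = evalp (restrO l) cf (Nat.pair x n) := by
        intro n
        show eval cr2 (Nat.pair (Nat.pair l x) n) >>= eval (trans cf) = _
        rw [cr2_eval]
        simp only [Nat.unpair_pair, Part.bind_eq_bind, Part.bind_some, pbind_some]
        refine (Part.bind_some _ _).trans ?_
        exact ihf l (Nat.pair x n)
      rw [eval]
      simp only [Nat.unpaired, Nat.unpair_pair]
      rw [show (fun n => (fun m : ℕ => decide (m = 0)) <$>
            eval (Code.comp (trans cf) cr2) (Nat.pair (Nat.pair l x) (n + 0)))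
          = fun n => (fun m : ℕ => decide (m = 0)) <$> evalp (restrO l) cf (Nat.pair x n)
          from funext fun n => by rw [Nat.add_zero, hq n]]
      rw [Part.map_id' (fun v : ℕ => Nat.add_zero v)]
      rfl

/- ----------  closure properties of OracleRecursiveIn  ---------- -/

theorem recIn_of_eq {A : Set ℕ} {f g : ℕ →. ℕ} (hf : OracleRecursiveIn A f) (H : ∀ n, f n = g n) :
    OracleRecursiveIn A g := by
  have hfg : f = g := funext H
  rwa [hfg] at hf

theorem recIn_of_partrec {A : Set ℕ} {f : ℕ →. ℕ} (hf : Nat.Partrec f) :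
    OracleRecursiveIn A f := by
  induction hf with
  | zero => exact .zero
  | succ => exact .succ
  | left => exact .left
  | right => exact .right
  | pair _ _ ihf ihg => exact .pair ihf ihg
  | comp _ _ ihf ihg => exact .comp ihf ihg
  | prec _ _ ihf ihg => exact .prec ihf ihg
  | rfind _ ihf => exact .rfind ihf

theorem computableIn_of_computable {A : Set ℕ} {f : ℕ → ℕ} (hf : Computable f) :
    OracleComputableIn A f := by
  have h : Nat.Partrec (f : ℕ →. ℕ) := Partrec.nat_iff.1 hf
  exact recIn_of_eq (recIn_of_partrec h) fun n => rfl

theorem computableIn_of_eq {A : Set ℕ} {f g : ℕ → ℕ} (hf : OracleComputableIn A f)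
    (H : ∀ n, f n = g n) : OracleComputableIn A g := by
  have hfg : f = g := funext H
  rwa [hfg] at hf

theorem computableIn_comp {A : Set ℕ} {f g : ℕ → ℕ}
    (hf : OracleComputableIn A f) (hg : OracleComputableIn A g) : OracleComputableIn A fun n => f (g n) := by
  have hc := OracleRecursiveIn.comp (A := A) (f := fun n => Part.some (f n))
    (g := fun n => Part.some (g n)) hf hg
  exact recIn_of_eq hc fun n => by simp [Part.bind_eq_bind, Part.bind_some]

theorem computableIn_pair {A : Set ℕ} {f g : ℕ → ℕ}
    (hf : OracleComputableIn A f) (hg : OracleComputableIn A g) :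
    OracleComputableIn A fun n => Nat.pair (f n) (g n) := by
  have hc := OracleRecursiveIn.pair (A := A) (f := fun n => Part.some (f n))
    (g := fun n => Part.some (g n)) hf hg
  refine recIn_of_eq hc fun n => ?_
  apply Part.eq_some_iff.2
  rw [mem_seq_pair]
  exact ⟨f n, Part.mem_some _, g n, Part.mem_some _, rfl⟩

theorem computableIn_chi (A : Set ℕ) : OracleComputableIn A (chi A) := chi_recIn A

theorem computableIn_prec {A : Set ℕ} {f s : ℕ → ℕ}
    (hf : OracleComputableIn A f) (hs : OracleComputableIn A s) :
    OracleComputableIn A fun k =>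
      k.unpair.2.rec (f k.unpair.1) fun y IH => s (Nat.pair k.unpair.1 (Nat.pair y IH)) := by
  have hc := OracleRecursiveIn.prec (A := A) (f := fun n => Part.some (f n))
    (g := fun n => Part.some (s n)) hf hs
  refine recIn_of_eq hc fun k => ?_
  simp only [Nat.unpaired]
  generalize k.unpair.1 = a
  generalize k.unpair.2 = n
  induction n with
  | zero => rfl
  | succ n ih =>
      have hstep : (Nat.rec (Part.some (f a))
            (fun y IH => do let i ← IH; Part.some (s (Nat.pair a (Nat.pair y i)))) (n + 1) : Part ℕ)
          = (Nat.rec (Part.some (f a))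
            (fun y IH => do let i ← IH; Part.some (s (Nat.pair a (Nat.pair y i)))) n : Part ℕ)
            >>= fun i => Part.some (s (Nat.pair a (Nat.pair n i))) := rfl
      rw [hstep, ih, Part.bind_eq_bind, Part.bind_some]

/- ----------  the oracle prefix function  ---------- -/

/-- The (encoded) list of the first `m` values of the characteristic function of `A`. -/
noncomputable def pref (A : Set ℕ) (m : ℕ) : ℕ :=
  Encodable.encode ((List.range m).map (chi A))

theorem restrO_pref (A : Set ℕ) (m : ℕ) : restrO (pref A m) = restr (chi A) m := by
  funext q
  simp only [restrO, pref, Denumerable.ofNat_encode, restr]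
  by_cases hq : q < m
  · rw [if_pos hq]
    have h1 : ((List.range m).map (chi A))[q]? = Option.some (chi A q) := by
      rw [List.getElem?_map, List.getElem?_range hq]
      rfl
    rw [h1]
    rfl
  · rw [if_neg hq]
    have h1 : ((List.range m).map (chi A))[q]? = Option.none := by
      rw [List.getElem?_eq_none_iff]
      simpa using Nat.le_of_not_lt hq
    rw [h1]
    rfl

/-- Appending an element to an encoded list. -/
def snoc (w : ℕ) : ℕ :=
  Encodable.encode ((Denumerable.ofNat (List ℕ) w.unpair.1) ++ [w.unpair.2])

theorem snoc_comp : Computable snoc :=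
  (Primrec.encode.comp (Primrec.list_concat.comp
    ((Primrec.ofNat (List ℕ)).comp punp1) punp2)).to_comp

theorem pref_rec (A : Set ℕ) : ∀ m : ℕ,
    (Nat.rec 0 (fun y IH => snoc (Nat.pair IH (chi A y))) m : ℕ) = pref A m := by
  intro m
  induction m with
  | zero => rfl
  | succ m ih =>
      show snoc (Nat.pair (Nat.rec 0 (fun y IH => snoc (Nat.pair IH (chi A y))) m) (chi A m))
        = pref A (m + 1)
      rw [ih]
      simp only [snoc, pref, Nat.unpair_pair, Denumerable.ofNat_encode]
      rw [List.range_succ, List.map_append]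
      simp

theorem pref_computableIn (A : Set ℕ) : OracleComputableIn A (pref A) := by
  have hstep : OracleComputableIn A
      fun z => snoc (Nat.pair z.unpair.2.unpair.2 (chi A z.unpair.2.unpair.1)) := by
    apply computableIn_comp (computableIn_of_computable snoc_comp)
    apply computableIn_pair
    · exact computableIn_of_computable (punp2.comp punp2).to_comp
    · exact computableIn_comp (computableIn_chi A)
        (computableIn_of_computable (punp1.comp punp2).to_comp)
  have hF := computableIn_prec (A := A) (f := fun _ : ℕ => (0 : ℕ))
    (computableIn_of_computable (Computable.const 0)) hstep
  have hpair0 : OracleComputableIn A fun m : ℕ => Nat.pair 0 m :=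
    computableIn_of_computable ((Primrec₂.natPair.comp (Primrec.const 0) Primrec.id).to_comp)
  have hcomp := computableIn_comp hF hpair0
  refine computableIn_of_eq hcomp fun m => ?_
  simp only [Nat.unpair_pair]
  exact pref_rec A m

/- ----------  the universal `A`-partial function  ---------- -/

/-- Plain step evaluation: on `pair p (pair (pair c x) (pair m kf))`, run the
`c`-th code for `kf` steps on input `pair p x`. -/
def theta' (v : ℕ) : Option ℕ :=
  Nat.Partrec.Code.evaln v.unpair.2.unpair.2.unpair.2
    (Denumerable.ofNat Code v.unpair.2.unpair.1.unpair.1)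
    (Nat.pair v.unpair.1 v.unpair.2.unpair.1.unpair.2)

set_option maxHeartbeats 1000000 in
theorem theta'_prim : Primrec theta' := by
  have h1 : Primrec fun v : ℕ =>
      ((v.unpair.2.unpair.2.unpair.2, Denumerable.ofNat Code v.unpair.2.unpair.1.unpair.1),
        Nat.pair v.unpair.1 v.unpair.2.unpair.1.unpair.2) :=
    ((punp2.comp (punp2.comp punp2)).pair
      ((Primrec.ofNat Code).comp (punp1.comp (punp1.comp punp2)))).pair
      (Primrec₂.natPair.comp punp1 (punp2.comp (punp1.comp punp2)))
  exact Nat.Partrec.Code.primrec_evaln.comp h1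

def DD' (v : ℕ) : ℕ := cond (theta' v).isSome 0 1
def EE' (v : ℕ) : ℕ := (theta' v).getD 0

theorem DD'_prim : Primrec DD' :=
  Primrec.cond (Primrec.option_isSome.comp theta'_prim) (Primrec.const 0) (Primrec.const 1)

theorem EE'_prim : Primrec EE' :=
  Primrec.option_getD.comp theta'_prim (Primrec.const 0)

/-- The oracle-dependent step function. -/
noncomputable def DA (A : Set ℕ) (w : ℕ) : ℕ :=
  DD' (Nat.pair (pref A w.unpair.2.unpair.1) w)
noncomputable def EA (A : Set ℕ) (w : ℕ) : ℕ :=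
  EE' (Nat.pair (pref A w.unpair.2.unpair.1) w)

theorem DA_computableIn (A : Set ℕ) : OracleComputableIn A (DA A) := by
  apply computableIn_comp (computableIn_of_computable DD'_prim.to_comp)
  apply computableIn_pair
  · exact computableIn_comp (pref_computableIn A)
      (computableIn_of_computable (punp1.comp punp2).to_comp)
  · exact computableIn_of_computable Computable.id

theorem EA_computableIn (A : Set ℕ) : OracleComputableIn A (EA A) := by
  apply computableIn_comp (computableIn_of_computable EE'_prim.to_comp)
  apply computableIn_pair
  · exact computableIn_comp (pref_computableIn A)
      (computableIn_of_computable (punp1.comp punp2).to_comp)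
  · exact computableIn_of_computable Computable.id

/-- The universal `A`-partial function. -/
noncomputable def u (A : Set ℕ) : ℕ →. ℕ :=
  fun k => (Nat.pair <$> Part.some k <*>
      Nat.rfind fun z => (fun m => m = 0) <$> Part.some (DA A (Nat.pair k z)))
    >>= fun w => Part.some (EA A w)

theorem u_recIn (A : Set ℕ) : OracleRecursiveIn A (u A) := by
  have h1 : OracleRecursiveIn A fun w => Part.some (DA A w) := DA_computableIn A
  have h2 := OracleRecursiveIn.rfind h1
  have h3 : OracleRecursiveIn A fun k : ℕ => Part.some k :=
    computableIn_of_computable Computable.id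
  have h4 := OracleRecursiveIn.pair h3 h2
  have h5 : OracleRecursiveIn A fun w => Part.some (EA A w) := EA_computableIn A
  exact OracleRecursiveIn.comp h5 h4

theorem u_intro {A : Set ℕ} {k z v : ℕ}
    (hz : z ∈ Nat.rfind fun z => (fun m => m = 0) <$> Part.some (DA A (Nat.pair k z)))
    (hv : v = EA A (Nat.pair k z)) : v ∈ u A k := by
  show v ∈ _ >>= fun w => Part.some (EA A w)
  rw [Part.bind_eq_bind, Part.mem_bind_iff]
  refine ⟨Nat.pair k z, ?_, by rw [hv]; exact Part.mem_some _⟩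
  rw [mem_seq_pair]
  exact ⟨k, Part.mem_some _, z, hz, rfl⟩

/-- Universality: every converging oracle computation is found by `u`. -/
theorem u_correct {A : Set ℕ} {c : CodeO} {x v : ℕ}
    (hv : v ∈ evalp (chi A : ℕ →. ℕ) c x) :
    v ∈ u A (Nat.pair (Encodable.encode (trans c)) x) := by
  classical
  obtain ⟨m, hm⟩ := evalp_compact c x v hv
  have h1 : v ∈ eval (trans c) (Nat.pair (pref A m) x) := by
    rw [trans_eval, restrO_pref]
    exact hm
  obtain ⟨kf, hkf⟩ := Nat.Partrec.Code.evaln_complete.1 h1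
  have hth : theta' (Nat.pair (pref A m)
      (Nat.pair (Nat.pair (Encodable.encode (trans c)) x) (Nat.pair m kf))) = Option.some v := by
    unfold theta'
    simp only [Nat.unpair_pair]
    rw [Denumerable.ofNat_encode]
    exact Option.mem_def.1 hkf
  have hD0 : DA A (Nat.pair (Nat.pair (Encodable.encode (trans c)) x) (Nat.pair m kf)) = 0 := by
    unfold DA DD'
    simp only [Nat.unpair_pair]
    rw [hth]
    rfl
  obtain ⟨z0, hz0, -⟩ := Nat.rfind_min'
    (p := fun z => decide (DA A (Nat.pair (Nat.pair (Encodable.encode (trans c)) x) z) = 0))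
    (m := Nat.pair m kf) (by simp [hD0])
  have hcoe : (↑(fun z => decide
        (DA A (Nat.pair (Nat.pair (Encodable.encode (trans c)) x) z) = 0)) : ℕ →. Bool)
      = fun z => (fun m : ℕ => decide (m = 0)) <$>
          Part.some (DA A (Nat.pair (Nat.pair (Encodable.encode (trans c)) x) z)) := by
    funext z
    rw [PFun.coe_val, Part.map_eq_map, Part.map_some]
  rw [hcoe] at hz0
  have hDz0 : DA A (Nat.pair (Nat.pair (Encodable.encode (trans c)) x) z0) = 0 := by
    have hsp := Nat.rfind_spec hz0
    rw [Part.map_eq_map, Part.map_some] at hsp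
    simpa using hsp
  have hsome0 : (theta' (Nat.pair (pref A z0.unpair.1)
      (Nat.pair (Nat.pair (Encodable.encode (trans c)) x) z0))).isSome = true := by
    by_contra hns
    unfold DA DD' at hDz0
    simp only [Nat.unpair_pair] at hDz0
    rw [Bool.not_eq_true] at hns
    rw [hns] at hDz0
    simp at hDz0
  obtain ⟨v0, hv0⟩ := Option.isSome_iff_exists.1 hsome0
  have hv0mem : v0 ∈ evalp (chi A : ℕ →. ℕ) c x := by
    have hev : v0 ∈ Nat.Partrec.Code.evaln z0.unpair.2 (trans c)
        (Nat.pair (pref A z0.unpair.1) x) := by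
      rw [Option.mem_def]
      have := hv0
      unfold theta' at this
      simp only [Nat.unpair_pair] at this
      rw [Denumerable.ofNat_encode] at this
      exact this
    have h2 := Nat.Partrec.Code.evaln_sound hev
    rw [trans_eval, restrO_pref] at h2
    exact evalp_mono (restr_le (chi A) _) c x v0 h2
  have hveq : v0 = v := Part.mem_unique hv0mem hv
  refine u_intro hz0 ?_
  unfold EA EE'
  simp only [Nat.unpair_pair]
  rw [hv0, hveq]
  rfl

end RecThmAux

/-- Recursion theorem with parameters for relatively precomplete
numberings. -/
theorem recursion_theorem_param_precompleteIn (γ : ℕ → ℕ → Prop)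
    (hγ : Equivalence γ) (A : Set ℕ) (hpre : PrecompleteIn γ A)
    (h : ℕ → ℕ → ℕ) (hh : OracleComputableIn₂ A h) :
    ∃ f : ℕ → ℕ, OracleComputableIn A f ∧ ∀ n : ℕ, γ (h n (f n)) (f n) := by
  classical
  -- the diagonal partial `A`-computable function
  have hψ : OracleRecursiveIn A fun k => RecThmAux.u A (Nat.pair k.unpair.2 k) := by
    have hq : OracleRecursiveIn A fun k : ℕ => Part.some (Nat.pair k.unpair.2 k) :=
      RecThmAux.computableIn_of_computable
        ((Primrec₂.natPair.comp (Primrec.snd.comp Primrec.unpair) Primrec.id).to_comp)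
    have hc := OracleRecursiveIn.comp (RecThmAux.u_recIn A) hq
    exact RecThmAux.recIn_of_eq hc fun k => by
      exact Part.bind_some _ _
  -- a total `A`-computable modulo-`γ` extension
  obtain ⟨g, hg, hgspec⟩ := hpre _ hψ
  -- the target function `k ↦ h (k₁) (g k)`
  have ht : OracleRecursiveIn A fun k => Part.some (h k.unpair.1 (g k)) := by
    have hpairk : OracleComputableIn A fun k => Nat.pair k.unpair.1 (g k) :=
      RecThmAux.computableIn_pair
        (RecThmAux.computableIn_of_computable ((Primrec.fst.comp Primrec.unpair).to_comp)) hg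
    have hc := RecThmAux.computableIn_comp hh hpairk
    exact RecThmAux.computableIn_of_eq hc fun k => by simp [Nat.unpair_pair]
  obtain ⟨c₀, hc₀⟩ := RecThmAux.exists_codeO ht
  refine ⟨fun n => g (Nat.pair n (Encodable.encode (RecThmAux.trans c₀))), ?_, ?_⟩
  · exact RecThmAux.computableIn_comp hg
      (RecThmAux.computableIn_of_computable
        ((Primrec₂.natPair.comp Primrec.id
          (Primrec.const (Encodable.encode (RecThmAux.trans c₀)))).to_comp))
  · intro n
    have h1 : Part.some
          (h (Nat.pair n (Encodable.encode (RecThmAux.trans c₀))).unpair.1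
            (g (Nat.pair n (Encodable.encode (RecThmAux.trans c₀)))))
        = RecThmAux.evalp (chi A : ℕ →. ℕ) c₀
            (Nat.pair n (Encodable.encode (RecThmAux.trans c₀))) :=
      congrFun hc₀ (Nat.pair n (Encodable.encode (RecThmAux.trans c₀)))
    have h2 : h n (g (Nat.pair n (Encodable.encode (RecThmAux.trans c₀))))
        ∈ RecThmAux.evalp (chi A : ℕ →. ℕ) c₀
            (Nat.pair n (Encodable.encode (RecThmAux.trans c₀))) := by
      rw [← h1, Nat.unpair_pair]
      exact Part.mem_some _
    have hmem := RecThmAux.u_correct h2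
    have h3 : h n (g (Nat.pair n (Encodable.encode (RecThmAux.trans c₀))))
        ∈ RecThmAux.u A
            (Nat.pair (Nat.pair n (Encodable.encode (RecThmAux.trans c₀))).unpair.2
              (Nat.pair n (Encodable.encode (RecThmAux.trans c₀)))) := by
      rw [Nat.unpair_pair]
      exact hmem
    exact hgspec (Nat.pair n (Encodable.encode (RecThmAux.trans c₀))) _ h3
end
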